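/- Let n ≥ 1 and C ≥ 1 be integers with 2C ≤ n. For 0 ≤ k ≤ n-1 define Γ_k = ((n-k-C)(n-k-C+1)⋯(n-k+C-1))/((n-C)(n-C+1)⋯(n+C-1)) (a ratio of products of 2C consecutive integers; Γ_0 = 1). Then for every integer ℓ with 2C ≤ ℓ ≤ n, (Σ_{k=n-ℓ}^{n-1} Γ_k)/(Σ_{k=0}^{n-1} Γ_k) = ∏_{k=-C}^{C} (ℓ+k)/(n+k). -/

import Mathlib

open Finset

lemma icc_prod_eq_range (C : ℕ) (x : ℝ) :
    ∏ k ∈ Finset.Icc (-(C : ℤ)) (C : ℤ), (x + k)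
      = ∏ j ∈ Finset.range (2 * C + 1), (x - C + j) := by
  refine Finset.prod_nbij' (fun k => (k + (C : ℤ)).toNat) (fun j => (j : ℤ) - C)
    ?_ ?_ ?_ ?_ ?_
  · intro a ha
    simp only [Finset.mem_Icc] at ha
    simp only [Finset.mem_range]
    omega
  · intro a ha
    simp only [Finset.mem_range] at ha
    simp only [Finset.mem_Icc]
    omega
  · intro a ha
    simp only [Finset.mem_Icc] at ha
    show ((a + (C : ℤ)).toNat : ℤ) - C = a
    omega
  · intro a ha
    simp only [Finset.mem_range] at ha
    show ((a : ℤ) - C + C).toNat = a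
    omega
  · intro a ha
    simp only [Finset.mem_Icc] at ha
    have : ((( a + (C:ℤ)).toNat : ℤ) : ℝ) = (a : ℝ) + C := by
      push_cast [Int.toNat_of_nonneg (by omega : (0:ℤ) ≤ a + C)]; ring
    push_cast at this ⊢
    rw [this]; ring

lemma key_sum (C : ℕ) : ∀ L : ℕ,
    (2 * (C : ℝ) + 1) * ∑ m ∈ Finset.Icc 1 L, ∏ j ∈ Finset.range (2 * C), ((m : ℝ) - C + j)
      = ∏ j ∈ Finset.range (2 * C + 1), ((L : ℝ) - C + j) := by
  intro L
  induction L with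
  | zero =>
    rw [Finset.prod_eq_zero (Finset.mem_range.mpr (by omega : C < 2 * C + 1))]
    · simp
    · push_cast; ring
  | succ L ih =>
    rw [Finset.sum_Icc_succ_top (by omega : 1 ≤ L + 1)]
    have hA : ∏ j ∈ Finset.range (2 * C + 1), ((L : ℝ) - C + j)
        = (∏ j ∈ Finset.range (2 * C), (((L : ℝ) + 1) - C + j)) * ((L : ℝ) - C) := by
      rw [Finset.prod_range_succ']
      congr 1
      · exact Finset.prod_congr rfl (fun j _ => by push_cast; ring)
      · norm_num
    rw [hA] at ih
    rw [Finset.prod_range_succ]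
    have h1 : ∀ j : ℕ, (((L + 1 : ℕ) : ℝ) - C + j) = ((L : ℝ) + 1) - C + j := by
      intro j; push_cast; ring
    rw [Finset.prod_congr rfl (fun j _ => h1 j), h1]
    push_cast
    linear_combination ih

theorem gamma_ratio_eq_product (n C ℓ : ℕ)
    (hn : 1 ≤ n) (hC : 1 ≤ C) (h2C : 2 * C ≤ n)
    (hℓ1 : 2 * C ≤ ℓ) (hℓ2 : ℓ ≤ n)
    (Γ : ℕ → ℝ)
    (hΓ : ∀ k, Γ k = (∏ j ∈ Finset.range (2 * C), ((n : ℝ) - k - C + j)) /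
        (∏ j ∈ Finset.range (2 * C), ((n : ℝ) - C + j))) :
    (∑ k ∈ Finset.Ico (n - ℓ) n, Γ k) / (∑ k ∈ Finset.range n, Γ k) =
      ∏ k ∈ Finset.Icc (-(C : ℤ)) (C : ℤ), (((ℓ : ℝ) + k) / ((n : ℝ) + k)) := by
  have hCn : (C : ℝ) + 1 ≤ n := by exact_mod_cast (by omega : C + 1 ≤ n)
  set D := ∏ j ∈ Finset.range (2 * C), ((n : ℝ) - C + j) with hD
  have hDpos : 0 < D := Finset.prod_pos fun j hj => by
    have : (0 : ℝ) ≤ j := Nat.cast_nonneg j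
    linarith
  -- sum transformation
  have hsum : ∀ L : ℕ, L ≤ n →
      ∑ k ∈ Finset.Ico (n - L) n, Γ k
        = (∑ m ∈ Finset.Icc 1 L, ∏ j ∈ Finset.range (2 * C), ((m : ℝ) - C + j)) / D := by
    intro L hL
    simp only [hΓ]
    rw [← Finset.sum_div]
    congr 1
    refine Finset.sum_nbij' (fun k => n - k) (fun m => n - m) ?_ ?_ ?_ ?_ ?_
    · intro k hk
      simp only [Finset.mem_Ico] at hk
      simp only [Finset.mem_Icc]
      omega
    · intro m hm
      simp only [Finset.mem_Icc] at hm
      simp only [Finset.mem_Ico]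
      omega
    · intro k hk
      simp only [Finset.mem_Ico] at hk
      show n - (n - k) = k
      omega
    · intro m hm
      simp only [Finset.mem_Icc] at hm
      show n - (n - m) = m
      omega
    · intro k hk
      simp only [Finset.mem_Ico] at hk
      refine Finset.prod_congr rfl (fun j _ => ?_)
      have : ((n - k : ℕ) : ℝ) = (n : ℝ) - k := by
        push_cast [Nat.cast_sub (le_of_lt hk.2)]; ring
      rw [this]
  have hnum := hsum ℓ hℓ2
  have hden := hsum n le_rfl
  rw [Nat.sub_self] at hden
  set Sl := ∑ m ∈ Finset.Icc 1 ℓ, ∏ j ∈ Finset.range (2 * C), ((m : ℝ) - C + j) with hSl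
  set Sn := ∑ m ∈ Finset.Icc 1 n, ∏ j ∈ Finset.range (2 * C), ((m : ℝ) - C + j) with hSn
  set Ql := ∏ j ∈ Finset.range (2 * C + 1), ((ℓ : ℝ) - C + j) with hQl
  set Qn := ∏ j ∈ Finset.range (2 * C + 1), ((n : ℝ) - C + j) with hQn
  have hkl : (2 * (C : ℝ) + 1) * Sl = Ql := key_sum C ℓ
  have hkn : (2 * (C : ℝ) + 1) * Sn = Qn := key_sum C n
  have hQnpos : 0 < Qn := Finset.prod_pos fun j hj => by
    have : (0 : ℝ) ≤ j := Nat.cast_nonneg j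
    linarith
  have hQnlpos : 0 < ∏ k ∈ Finset.Icc (-(C : ℤ)) (C : ℤ), ((n : ℝ) + k) := by
    rw [icc_prod_eq_range]
    exact hQnpos
  have hc1 : (0 : ℝ) < 2 * (C : ℝ) + 1 := by positivity
  have hSlv : Sl = Ql / (2 * (C : ℝ) + 1) := by field_simp [← hkl]; linear_combination hkl
  have hSnv : Sn = Qn / (2 * (C : ℝ) + 1) := by field_simp [← hkn]; linear_combination hkn
  rw [hnum, Finset.range_eq_Ico, hden, hSlv, hSnv,
    Finset.prod_div_distrib, icc_prod_eq_range, icc_prod_eq_range]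
  rw [← hQl, ← hQn]
  rw [div_div_div_comm, div_self hDpos.ne', div_div_div_comm, div_self hc1.ne', div_one, div_one]
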